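/- arXiv:2008.03392 — 5 statements merged into one kernel-verified Lean document; each statement's English description precedes it below -/
import Mathlib

section
/- Grouping effect bound for the simplified SCCA: let X in R^{n x p} and Y in R^{n x q} have columns of unit Euclidean norm, let v* in R^q satisfy ||v*||_2 <= 1, and let u* satisfy the stationarity equation 2*alpha_1*u* + lambda_1*s = X^T Y v* for some alpha_1 > 0, lambda_1 >= 0, where s_k = sign(u*_k) whenever u*_k != 0. If u*_i * u*_j > 0, then |u*_i - u*_j| <= (1/alpha_1) * sigma_max(Y) * sqrt((1 - r_ij)/2), where r_ij = <x_i, x_j>. -/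
open Matrix
noncomputable def sigmaMax {n q : ℕ} (Y : Matrix (Fin n) (Fin q) ℝ) : ℝ :=
  ‖(Matrix.toEuclideanLin Y).toContinuousLinearMap‖

theorem stmt_10 (n p q : ℕ) (X : Matrix (Fin n) (Fin p) ℝ) (Y : Matrix (Fin n) (Fin q) ℝ)
    (hX : ∀ k, Real.sqrt (∑ l, X l k ^ 2) = 1)
    (hY : ∀ k, Real.sqrt (∑ l, Y l k ^ 2) = 1)
    (v : Fin q → ℝ) (hv : Real.sqrt (∑ j, v j ^ 2) ≤ 1)
    (u s : Fin p → ℝ) (α₁ lam₁ : ℝ) (hα : 0 < α₁) (hlam : 0 ≤ lam₁)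
    (hs : ∀ k, u k ≠ 0 → s k = Real.sign (u k))
    (hstat : ∀ k, 2 * α₁ * u k + lam₁ * s k = ((Xᵀ * Y).mulVec v) k)
    (i j : Fin p) (hij : u i * u j > 0) (r : ℝ) (hr : r = ∑ l, X l i * X l j) :
    |u i - u j| ≤ (1 / α₁) * sigmaMax Y * Real.sqrt ((1 - r) / 2) := by
  set w : Fin n → ℝ := Y.mulVec v with hw
  -- column sums
  have hsum1 : ∀ k, (∑ l, X l k ^ 2) = 1 := by
    intro k
    have h0 : (0:ℝ) ≤ ∑ l, X l k ^ 2 := Finset.sum_nonneg fun l _ => sq_nonneg _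
    have := Real.sq_sqrt h0
    rw [hX k] at this; linarith
  have hvsum : (∑ j, v j ^ 2) ≤ 1 := by
    have h0 : (0:ℝ) ≤ ∑ j, v j ^ 2 := Finset.sum_nonneg fun l _ => sq_nonneg _
    nlinarith [Real.sq_sqrt h0, Real.sqrt_nonneg (∑ j, v j ^ 2)]
  -- signs agree
  have hui : u i ≠ 0 := fun h => by simp [h] at hij
  have huj : u j ≠ 0 := fun h => by simp [h] at hij
  have hsij : s i = s j := by
    rw [hs i hui, hs j huj]
    rcases lt_or_gt_of_ne hui with h | h
    · have hj : u j < 0 := by nlinarith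
      rw [Real.sign_of_neg h, Real.sign_of_neg hj]
    · have hj : 0 < u j := by nlinarith
      rw [Real.sign_of_pos h, Real.sign_of_pos hj]
  -- key identity
  have key : 2 * α₁ * (u i - u j) = ∑ l, (X l i - X l j) * w l := by
    have h1 := hstat i
    have h2 := hstat j
    have hmv : ∀ k, ((Xᵀ * Y).mulVec v) k = ∑ l, X l k * w l := by
      intro k
      rw [← Matrix.mulVec_mulVec]
      simp [Matrix.mulVec, dotProduct, Matrix.transpose_apply, hw]
    rw [hmv i] at h1; rw [hmv j] at h2
    have : (2 * α₁ * u i + lam₁ * s i) - (2 * α₁ * u j + lam₁ * s j)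
        = (∑ l, X l i * w l) - ∑ l, X l j * w l := by rw [h1, h2]
    rw [hsij] at this
    have hsplit : (∑ l, (X l i - X l j) * w l)
        = (∑ l, X l i * w l) - ∑ l, X l j * w l := by
      rw [← Finset.sum_sub_distrib]
      exact Finset.sum_congr rfl fun l _ => by ring
    rw [hsplit]; linarith [this]
  -- Cauchy-Schwarz
  have hcs : (∑ l, (X l i - X l j) * w l) ^ 2
      ≤ (∑ l, (X l i - X l j) ^ 2) * ∑ l, w l ^ 2 :=
    Finset.sum_mul_sq_le_sq_mul_sq _ _ _
  -- first factor
  have hfac : (∑ l, (X l i - X l j) ^ 2) = 2 - 2 * r := by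
    have hexp : (∑ l, (X l i - X l j) ^ 2)
        = ((∑ l, X l i ^ 2) + ∑ l, X l j ^ 2) - 2 * ∑ l, X l i * X l j := by
      rw [Finset.mul_sum, ← Finset.sum_add_distrib, ← Finset.sum_sub_distrib]
      exact Finset.sum_congr rfl fun l _ => by ring
    rw [hexp, hsum1 i, hsum1 j, hr]; ring
  -- second factor : operator norm bound
  have hop : Real.sqrt (∑ l, w l ^ 2) ≤ sigmaMax Y := by
    set ve : EuclideanSpace ℝ (Fin q) := (WithLp.equiv 2 (Fin q → ℝ)).symm v with hve
    have happ : (Matrix.toEuclideanLin Y).toContinuousLinearMap ve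
        = (WithLp.equiv 2 (Fin n → ℝ)).symm w := by
      simp [hve, hw, Matrix.toEuclideanLin_apply_piLp_toLp]
    have hnorm := ((Matrix.toEuclideanLin Y).toContinuousLinearMap).le_opNorm ve
    rw [happ] at hnorm
    have hnw : ‖(WithLp.equiv 2 (Fin n → ℝ)).symm w‖ = Real.sqrt (∑ l, w l ^ 2) := by
      rw [EuclideanSpace.norm_eq]
      congr 1; apply Finset.sum_congr rfl; intro l _
      rw [Real.norm_eq_abs, sq_abs]; rfl
    have hnv : ‖ve‖ = Real.sqrt (∑ j, v j ^ 2) := by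
      rw [EuclideanSpace.norm_eq]
      congr 1; apply Finset.sum_congr rfl; intro l _
      rw [Real.norm_eq_abs, sq_abs]; rfl
    rw [hnw, hnv] at hnorm
    calc Real.sqrt (∑ l, w l ^ 2)
        ≤ sigmaMax Y * Real.sqrt (∑ j, v j ^ 2) := hnorm
      _ ≤ sigmaMax Y * 1 := by
          apply mul_le_mul_of_nonneg_left hv (norm_nonneg _)
      _ = sigmaMax Y := mul_one _
  -- assemble
  have hwsq : (0:ℝ) ≤ ∑ l, w l ^ 2 := Finset.sum_nonneg fun l _ => sq_nonneg _
  have h2r : (0:ℝ) ≤ 2 - 2 * r := by rw [← hfac]; positivity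
  have habs : |∑ l, (X l i - X l j) * w l|
      ≤ Real.sqrt (2 - 2 * r) * Real.sqrt (∑ l, w l ^ 2) := by
    rw [← Real.sqrt_mul h2r]
    rw [← Real.sqrt_sq_eq_abs]
    apply Real.sqrt_le_sqrt
    rw [← hfac]; exact hcs
  have hs2 : Real.sqrt (2 - 2 * r) = 2 * Real.sqrt ((1 - r) / 2) := by
    have : 2 - 2 * r = 2 ^ 2 * ((1 - r) / 2) := by ring
    rw [this, Real.sqrt_mul (by positivity), Real.sqrt_sq (by norm_num)]
  have hwle : Real.sqrt (∑ l, w l ^ 2) ≤ sigmaMax Y := hop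
  have hfin : |2 * α₁ * (u i - u j)| ≤ 2 * Real.sqrt ((1 - r) / 2) * sigmaMax Y := by
    rw [key]
    calc |∑ l, (X l i - X l j) * w l|
        ≤ Real.sqrt (2 - 2 * r) * Real.sqrt (∑ l, w l ^ 2) := habs
      _ ≤ Real.sqrt (2 - 2 * r) * sigmaMax Y :=
          mul_le_mul_of_nonneg_left hwle (Real.sqrt_nonneg _)
      _ = 2 * Real.sqrt ((1 - r) / 2) * sigmaMax Y := by rw [hs2]
  have habs2 : |2 * α₁ * (u i - u j)| = 2 * α₁ * |u i - u j| := by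
    rw [abs_mul, abs_of_pos (by positivity)]
  rw [habs2] at hfin
  rw [div_mul_eq_mul_div, one_mul, div_mul_eq_mul_div, le_div_iff₀ hα]
  nlinarith [hfin]
end

section
/- Grouping effect bound (L1 version): under the same stationarity assumption 2*alpha_1*u* + lambda_1*s = X^T Y v* with alpha_1 > 0, lambda_1 >= 0, columns of X of unit norm, and ||v*||_1 <= c_2, if u*_i * u*_j > 0 then |u*_i - u*_j| <= (c_2/alpha_1) * sqrt( sum_l max_j Y_{lj}^2 ) * sqrt((1 - r_ij)/2), where r_ij = <x_i, x_j>. -/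
open Matrix
theorem stmt_11 (n p q : ℕ) (X : Matrix (Fin n) (Fin p) ℝ) (Y : Matrix (Fin n) (Fin q) ℝ)
    (hX : ∀ k, Real.sqrt (∑ l, X l k ^ 2) = 1)
    (c₂ : ℝ) (v : Fin q → ℝ) (hv : (∑ j, |v j|) ≤ c₂)
    (u s : Fin p → ℝ) (α₁ lam₁ : ℝ) (hα : 0 < α₁) (hlam : 0 ≤ lam₁)
    (hs : ∀ k, u k ≠ 0 → s k = Real.sign (u k))
    (hstat : ∀ k, 2 * α₁ * u k + lam₁ * s k = ((Xᵀ * Y).mulVec v) k)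
    (i j : Fin p) (hij : u i * u j > 0) (r : ℝ) (hr : r = ∑ l, X l i * X l j) :
    |u i - u j| ≤ (c₂ / α₁) * Real.sqrt (∑ l, ⨆ k, Y l k ^ 2) *
      Real.sqrt ((1 - r) / 2) := by
  have hc₂ : 0 ≤ c₂ := le_trans (Finset.sum_nonneg fun k _ => abs_nonneg _) hv
  set w : Fin n → ℝ := fun l => ∑ k, Y l k * v k with hw
  set T : Fin n → ℝ := fun l => ⨆ k, Y l k ^ 2 with hT
  have hsij : s i = s j := by
    rcases mul_pos_iff.mp hij with ⟨h1, h2⟩ | ⟨h1, h2⟩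
    · rw [hs i h1.ne', hs j h2.ne', Real.sign_of_pos h1, Real.sign_of_pos h2]
    · rw [hs i h1.ne, hs j h2.ne, Real.sign_of_neg h1, Real.sign_of_neg h2]
  have hmv : ∀ k, ((Xᵀ * Y).mulVec v) k = ∑ l, X l k * w l := by
    intro k
    simp only [Matrix.mulVec, Matrix.mul_apply, dotProduct, Matrix.transpose_apply, hw]
    simp_rw [Finset.sum_mul]
    rw [Finset.sum_comm]
    simp_rw [mul_assoc, ← Finset.mul_sum]
  have hD : ∑ l, (X l i - X l j) * w l = 2 * α₁ * (u i - u j) := by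
    simp_rw [sub_mul]
    rw [Finset.sum_sub_distrib, ← hmv i, ← hmv j, ← hstat i, ← hstat j, hsij]
    ring
  have hXi : ∑ l, X l i ^ 2 = 1 := by
    have := hX i
    nlinarith [Real.sq_sqrt (show (0:ℝ) ≤ ∑ l, X l i ^ 2 from
      Finset.sum_nonneg fun l _ => sq_nonneg _)]
  have hXj : ∑ l, X l j ^ 2 = 1 := by
    have := hX j
    nlinarith [Real.sq_sqrt (show (0:ℝ) ≤ ∑ l, X l j ^ 2 from
      Finset.sum_nonneg fun l _ => sq_nonneg _)]
  have hA : ∑ l, (X l i - X l j) ^ 2 = 2 - 2 * r := by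
    simp_rw [sub_sq, mul_assoc]
    rw [Finset.sum_add_distrib, Finset.sum_sub_distrib, ← Finset.mul_sum, hXi, hXj, hr]
    ring
  have h2r : 0 ≤ 2 - 2 * r := hA ▸ Finset.sum_nonneg fun l _ => sq_nonneg _
  have h1r : 0 ≤ (1 - r) / 2 := by linarith
  have key : ∀ l, w l ^ 2 ≤ c₂ ^ 2 * T l := by
    intro l
    rcases Nat.eq_zero_or_pos q with hq | hq
    · subst hq
      simp [hw, hT, Real.iSup_of_isEmpty]
    · haveI : Nonempty (Fin q) := ⟨⟨0, hq⟩⟩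
      have hbdd : BddAbove (Set.range fun k => Y l k ^ 2) :=
        (Set.finite_range _).bddAbove
      have hTnn : 0 ≤ T l := le_trans (sq_nonneg (Y l ⟨0, hq⟩)) (le_ciSup hbdd ⟨0, hq⟩)
      have habs : |w l| ≤ Real.sqrt (T l) * c₂ := by
        calc |∑ k, Y l k * v k| ≤ ∑ k, |Y l k * v k| := Finset.abs_sum_le_sum_abs _ _
          _ = ∑ k, |Y l k| * |v k| := by simp [abs_mul]
          _ ≤ ∑ k, Real.sqrt (T l) * |v k| := by
              refine Finset.sum_le_sum fun k _ => mul_le_mul_of_nonneg_right ?_ (abs_nonneg _)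
              rw [← Real.sqrt_sq_eq_abs]
              exact Real.sqrt_le_sqrt (le_ciSup hbdd k)
          _ = Real.sqrt (T l) * ∑ k, |v k| := (Finset.mul_sum _ _ _).symm
          _ ≤ Real.sqrt (T l) * c₂ :=
              mul_le_mul_of_nonneg_left hv (Real.sqrt_nonneg _)
      calc w l ^ 2 = |w l| ^ 2 := (sq_abs _).symm
        _ ≤ (Real.sqrt (T l) * c₂) ^ 2 := by
            exact pow_le_pow_left₀ (abs_nonneg _) habs 2
        _ = c₂ ^ 2 * T l := by rw [mul_pow, Real.sq_sqrt hTnn]; ring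
  have hTnn : ∀ l, 0 ≤ T l := by
    intro l
    rcases Nat.eq_zero_or_pos q with hq | hq
    · subst hq
      simp [hT, Real.iSup_of_isEmpty]
    · haveI : Nonempty (Fin q) := ⟨⟨0, hq⟩⟩
      have hbdd : BddAbove (Set.range fun k => Y l k ^ 2) :=
        (Set.finite_range _).bddAbove
      exact le_trans (sq_nonneg (Y l ⟨0, hq⟩)) (le_ciSup hbdd ⟨0, hq⟩)
  have hSnn : 0 ≤ ∑ l, T l := Finset.sum_nonneg fun l _ => hTnn l
  have hB : ∑ l, w l ^ 2 ≤ c₂ ^ 2 * ∑ l, T l := by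
    rw [Finset.mul_sum]
    exact Finset.sum_le_sum fun l _ => key l
  have hCS : (2 * α₁ * (u i - u j)) ^ 2 ≤ (2 - 2 * r) * (c₂ ^ 2 * ∑ l, T l) := by
    rw [← hD, ← hA]
    calc (∑ l, (X l i - X l j) * w l) ^ 2
        ≤ (∑ l, (X l i - X l j) ^ 2) * ∑ l, w l ^ 2 :=
          Finset.sum_mul_sq_le_sq_mul_sq Finset.univ _ _
      _ ≤ (∑ l, (X l i - X l j) ^ 2) * (c₂ ^ 2 * ∑ l, T l) := by
          exact mul_le_mul_of_nonneg_left hB (Finset.sum_nonneg fun l _ => sq_nonneg _)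
  have hsq : 2 * α₁ * |u i - u j| ≤
      Real.sqrt ((2 - 2 * r) * (c₂ ^ 2 * ∑ l, T l)) := by
    have h0 : 0 ≤ 2 * α₁ * |u i - u j| := by positivity
    have : (2 * α₁ * |u i - u j|) ^ 2 ≤ (2 - 2 * r) * (c₂ ^ 2 * ∑ l, T l) := by
      calc (2 * α₁ * |u i - u j|) ^ 2 = (2 * α₁ * (u i - u j)) ^ 2 := by
            rw [mul_pow, mul_pow, sq_abs]; ring
        _ ≤ _ := hCS
    calc 2 * α₁ * |u i - u j| = Real.sqrt ((2 * α₁ * |u i - u j|) ^ 2) :=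
          (Real.sqrt_sq h0).symm
      _ ≤ _ := Real.sqrt_le_sqrt this
  have hsplit : Real.sqrt ((2 - 2 * r) * (c₂ ^ 2 * ∑ l, T l)) =
      2 * (Real.sqrt ((1 - r) / 2) * (c₂ * Real.sqrt (∑ l, T l))) := by
    rw [show (2 - 2 * r) * (c₂ ^ 2 * ∑ l, T l) =
        (2 : ℝ) ^ 2 * (((1 - r) / 2) * (c₂ ^ 2 * ∑ l, T l)) by ring,
      Real.sqrt_mul (by positivity), Real.sqrt_sq (by norm_num : (0:ℝ) ≤ 2),
      Real.sqrt_mul h1r, Real.sqrt_mul (sq_nonneg c₂), Real.sqrt_sq hc₂]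
  rw [hsplit] at hsq
  rw [div_mul_eq_mul_div, div_mul_eq_mul_div, le_div_iff₀ hα]
  nlinarith [hsq]
end

section
/- Grouping effect bound for opposite signs: under the stationarity assumption 2*alpha_1*u* + lambda_1*s = X^T Y v* with alpha_1 > 0, lambda_1 >= 0, columns of X of unit norm, and ||v*||_2 <= 1, if u*_i * u*_j < 0 then |u*_i + u*_j| <= (1/alpha_1) * sigma_max(Y) * sqrt((1 + r_ij)/2), where r_ij = <x_i, x_j>. -/
open Matrix
theorem stmt_12 (n p q : ℕ) (X : Matrix (Fin n) (Fin p) ℝ) (Y : Matrix (Fin n) (Fin q) ℝ)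
    (hX : ∀ k, Real.sqrt (∑ l, X l k ^ 2) = 1)
    (v : Fin q → ℝ) (hv : Real.sqrt (∑ j, v j ^ 2) ≤ 1)
    (u s : Fin p → ℝ) (α₁ lam₁ : ℝ) (hα : 0 < α₁) (hlam : 0 ≤ lam₁)
    (hs : ∀ k, u k ≠ 0 → s k = Real.sign (u k))
    (hstat : ∀ k, 2 * α₁ * u k + lam₁ * s k = ((Xᵀ * Y).mulVec v) k)
    (i j : Fin p) (hij : u i * u j < 0) (r : ℝ) (hr : r = ∑ l, X l i * X l j) :
    |u i + u j| ≤ (1 / α₁) * sigmaMax Y * Real.sqrt ((1 + r) / 2) := by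
  set w : Fin n → ℝ := Y.mulVec v with hw
  have hui : u i ≠ 0 := fun h => by simp [h] at hij
  have huj : u j ≠ 0 := fun h => by simp [h] at hij
  -- signs cancel
  have hsij : s i + s j = 0 := by
    rw [hs i hui, hs j huj]
    rcases lt_or_gt_of_ne hui with h1 | h1
    · have h2 : 0 < u j := by nlinarith
      rw [Real.sign_of_neg h1, Real.sign_of_pos h2]; ring
    · have h2 : u j < 0 := by nlinarith
      rw [Real.sign_of_pos h1, Real.sign_of_neg h2]; ring
  have hXY : ∀ k, ((Xᵀ * Y).mulVec v) k = ∑ l, X l k * w l := by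
    intro k
    rw [← Matrix.mulVec_mulVec]
    simp [Matrix.mulVec, dotProduct, Matrix.transpose_apply, hw]
  have hsum : 2 * α₁ * (u i + u j) = ∑ l, (X l i + X l j) * w l := by
    have h1 := hstat i
    have h2 := hstat j
    rw [hXY i] at h1; rw [hXY j] at h2
    have : (2 * α₁ * u i + lam₁ * s i) + (2 * α₁ * u j + lam₁ * s j)
        = (∑ l, X l i * w l) + ∑ l, X l j * w l := by rw [h1, h2]
    rw [← Finset.sum_add_distrib] at this
    calc 2 * α₁ * (u i + u j)
        = (2 * α₁ * u i + lam₁ * s i) + (2 * α₁ * u j + lam₁ * s j)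
          - lam₁ * (s i + s j) := by ring
      _ = ∑ l, (X l i + X l j) * w l := by
          rw [this, hsij]; ring_nf
          exact Finset.sum_congr rfl fun l _ => by ring
  have hcol : ∀ k, (∑ l, X l k ^ 2) = 1 := by
    intro k
    have h := hX k
    have hnn : 0 ≤ ∑ l, X l k ^ 2 := by positivity
    nlinarith [Real.sq_sqrt hnn]
  have ha : (∑ l, (X l i + X l j) ^ 2) = 2 + 2 * r := by
    have : (∑ l, (X l i + X l j) ^ 2)
        = (∑ l, X l i ^ 2) + 2 * (∑ l, X l i * X l j) + (∑ l, X l j ^ 2) := by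
      rw [Finset.mul_sum, ← Finset.sum_add_distrib, ← Finset.sum_add_distrib]
      exact Finset.sum_congr rfl fun l _ => by ring
    rw [this, hcol i, hcol j, hr]; ring
  -- Cauchy-Schwarz
  have hCS : |∑ l, (X l i + X l j) * w l|
      ≤ Real.sqrt (2 + 2 * r) * Real.sqrt (∑ l, w l ^ 2) := by
    have h2r : 0 ≤ 2 + 2 * r := by rw [← ha]; positivity
    have h2 := Finset.sum_mul_sq_le_sq_mul_sq Finset.univ
      (fun l => X l i + X l j) w
    have hnn : 0 ≤ (∑ l, (X l i + X l j) ^ 2) * (∑ l, w l ^ 2) := by positivity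
    calc |∑ l, (X l i + X l j) * w l|
        = Real.sqrt ((∑ l, (X l i + X l j) * w l) ^ 2) := (Real.sqrt_sq_eq_abs _).symm
      _ ≤ Real.sqrt ((∑ l, (X l i + X l j) ^ 2) * (∑ l, w l ^ 2)) :=
          Real.sqrt_le_sqrt h2
      _ = Real.sqrt (2 + 2 * r) * Real.sqrt (∑ l, w l ^ 2) := by
          rw [ha, Real.sqrt_mul h2r]
  -- operator norm bound
  have hwnorm : Real.sqrt (∑ l, w l ^ 2) ≤ sigmaMax Y := by
    have hv' : ‖(WithLp.equiv 2 (Fin q → ℝ)).symm v‖ ≤ 1 := by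
      rw [EuclideanSpace.norm_eq]
      simpa [sq_abs] using hv
    have hb := (Matrix.toEuclideanLin Y).toContinuousLinearMap.le_opNorm
      ((WithLp.equiv 2 (Fin q → ℝ)).symm v)
    have happ : (Matrix.toEuclideanLin Y).toContinuousLinearMap
        ((WithLp.equiv 2 (Fin q → ℝ)).symm v) = (WithLp.equiv 2 (Fin n → ℝ)).symm w := by
      simp [hw, Matrix.toEuclideanLin_apply_piLp_toLp]
    rw [happ, EuclideanSpace.norm_eq] at hb
    have hσ : 0 ≤ sigmaMax Y := norm_nonneg _
    calc Real.sqrt (∑ l, w l ^ 2)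
        = Real.sqrt (∑ l, ‖(WithLp.equiv 2 (Fin n → ℝ)).symm w l‖ ^ 2) := by
          simp [sq_abs]
      _ ≤ sigmaMax Y * ‖(WithLp.equiv 2 (Fin q → ℝ)).symm v‖ := hb
      _ ≤ sigmaMax Y * 1 := by exact mul_le_mul_of_nonneg_left hv' hσ
      _ = sigmaMax Y := mul_one _
  have hσ : 0 ≤ sigmaMax Y := norm_nonneg _
  have hr2 : 0 ≤ 2 + 2 * r := by
    rw [← ha]; positivity
  have hsqrt : Real.sqrt ((1 + r) / 2) = Real.sqrt (2 + 2 * r) / 2 := by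
    rw [show (1 + r) / 2 = (2 + 2 * r) / 4 by ring, Real.sqrt_div hr2,
      show (4:ℝ) = 2^2 by norm_num, Real.sqrt_sq (by norm_num : (0:ℝ) ≤ 2)]
  have key : 2 * α₁ * |u i + u j| ≤ Real.sqrt (2 + 2 * r) * sigmaMax Y := by
    have : |2 * α₁ * (u i + u j)| ≤ Real.sqrt (2 + 2 * r) * sigmaMax Y := by
      rw [hsum]
      refine hCS.trans ?_
      exact mul_le_mul_of_nonneg_left hwnorm (Real.sqrt_nonneg _)
    rwa [abs_mul, abs_of_pos (by linarith : (0:ℝ) < 2 * α₁)] at this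
  rw [hsqrt]
  have h2a : (0:ℝ) < 2 * α₁ := by linarith
  calc |u i + u j| = (2 * α₁ * |u i + u j|) / (2 * α₁) := by field_simp
    _ ≤ (Real.sqrt (2 + 2 * r) * sigmaMax Y) / (2 * α₁) := by gcongr
    _ = 1 / α₁ * sigmaMax Y * (Real.sqrt (2 + 2 * r) / 2) := by field_simp
end

section
/- Solution of the QCLP with small L1 budget: let a in R^p be nonzero, S = {i : |a_i| = max_j |a_j|}, and 0 < c < sqrt(|S|). Then the vector u* defined by u*_i = (c/|S|)*sign(a_i) for i in S and u*_i = 0 otherwise is feasible (||u*||_2 <= 1, ||u*||_1 <= c) and maximizes <a, u> over {u : ||u||_2 <= 1, ||u||_1 <= c}, with optimal value c * max_j |a_j|. -/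
theorem stmt_13 (p : ℕ) (a : Fin p → ℝ) (ha : a ≠ 0) (c : ℝ) (hc : 0 < c)
    (S : Finset (Fin p)) (hS : S = Finset.univ.filter fun i => |a i| = ⨆ j, |a j|)
    (hc2 : c < Real.sqrt S.card)
    (u : Fin p → ℝ)
    (hu : u = fun i => if i ∈ S then (c / S.card) * Real.sign (a i) else 0) :
    (Real.sqrt (∑ i, u i ^ 2) ≤ 1 ∧ (∑ i, |u i|) ≤ c) ∧
    (∀ w : Fin p → ℝ, Real.sqrt (∑ i, w i ^ 2) ≤ 1 → (∑ i, |w i|) ≤ c →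
        (∑ i, a i * w i) ≤ ∑ i, a i * u i) ∧
    (∑ i, a i * u i) = c * ⨆ j, |a j| := by
  obtain ⟨i0, hi0⟩ : ∃ i, a i ≠ 0 := Function.ne_iff.mp ha
  have _inst : Nonempty (Fin p) := ⟨i0⟩
  set M := ⨆ j, |a j| with hM
  have hbdd : BddAbove (Set.range fun j => |a j|) :=
    Set.Finite.bddAbove (Set.finite_range _)
  have hle : ∀ j, |a j| ≤ M := fun j => le_ciSup hbdd j
  have hMpos : 0 < M := lt_of_lt_of_le (abs_pos.mpr hi0) (hle i0)
  obtain ⟨im, him⟩ := Finite.exists_max fun j => |a j|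
  have hMeq : M = |a im| := le_antisymm (ciSup_le him) (hle im)
  have hmem : ∀ i, i ∈ S ↔ |a i| = M := by
    intro i; simp [hS, hM]
  have hSne : S.Nonempty := ⟨im, (hmem im).mpr hMeq.symm⟩
  have hcard : (0:ℝ) < (S.card : ℝ) := by exact_mod_cast Finset.card_pos.mpr hSne
  have hsign : ∀ i ∈ S, a i * Real.sign (a i) = M := by
    intro i hi
    have habs : |a i| = M := (hmem i).mp hi
    have hne : a i ≠ 0 := by
      intro h; rw [h] at habs; simp at habs; exact hMpos.ne' habs.symm
    rcases lt_or_gt_of_ne hne with h | h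
    · rw [Real.sign_of_neg h, ← habs, abs_of_neg h]; ring
    · rw [Real.sign_of_pos h, ← habs, abs_of_pos h]; ring
  have hsabs : ∀ i ∈ S, |Real.sign (a i)| = 1 := by
    intro i hi
    have habs : |a i| = M := (hmem i).mp hi
    have hne : a i ≠ 0 := by
      intro h; rw [h] at habs; simp at habs; exact hMpos.ne' habs.symm
    rcases lt_or_gt_of_ne hne with h | h
    · rw [Real.sign_of_neg h]; simp
    · rw [Real.sign_of_pos h]; simp
  -- key sums
  have hvalue : (∑ i, a i * u i) = c * M := by
    subst hu
    have : ∀ i ∈ Finset.univ, a i * (if i ∈ S then (c / S.card) * Real.sign (a i) else 0)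
        = if i ∈ S then (c / S.card) * M else 0 := by
      intro i _
      by_cases hi : i ∈ S
      · simp only [hi, if_true]
        rw [show a i * ((c / S.card) * Real.sign (a i)) = (c / S.card) * (a i * Real.sign (a i)) by ring,
          hsign i hi]
      · simp [hi]
    rw [Finset.sum_congr rfl this, Finset.sum_ite_mem, Finset.univ_inter,
      Finset.sum_const, nsmul_eq_mul]
    field_simp
  have hl1 : (∑ i, |u i|) = c := by
    subst hu
    have : ∀ i ∈ Finset.univ, |if i ∈ S then (c / S.card) * Real.sign (a i) else 0|
        = if i ∈ S then c / S.card else 0 := by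
      intro i _
      by_cases hi : i ∈ S
      · simp only [hi, if_true, abs_mul, hsabs i hi, mul_one,
          abs_of_pos (div_pos hc hcard)]
      · simp [hi]
    rw [Finset.sum_congr rfl this, Finset.sum_ite_mem, Finset.univ_inter,
      Finset.sum_const, nsmul_eq_mul]
    field_simp
  refine ⟨⟨?_, hl1.le⟩, ?_, by rw [hvalue]⟩
  · -- L2 feasibility
    have hsum : (∑ i, u i ^ 2) = c ^ 2 / S.card := by
      subst hu
      have : ∀ i ∈ Finset.univ, (if i ∈ S then (c / S.card) * Real.sign (a i) else 0) ^ 2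
          = if i ∈ S then (c / S.card) ^ 2 else 0 := by
        intro i _
        by_cases hi : i ∈ S
        · simp only [hi, if_true, mul_pow]
          rw [show Real.sign (a i) ^ 2 = |Real.sign (a i)| ^ 2 by rw [sq_abs], hsabs i hi]
          ring
        · simp [hi]
      rw [Finset.sum_congr rfl this, Finset.sum_ite_mem, Finset.univ_inter,
        Finset.sum_const, nsmul_eq_mul]
      field_simp
    rw [hsum]
    have hc2' : c ^ 2 < S.card := by
      have := Real.sq_sqrt hcard.le
      nlinarith [Real.sqrt_nonneg (S.card : ℝ)]
    have h1 : c ^ 2 / (S.card : ℝ) ≤ 1 := by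
      rw [div_le_one hcard]; linarith
    calc Real.sqrt (c ^ 2 / S.card) ≤ Real.sqrt 1 := Real.sqrt_le_sqrt h1
      _ = 1 := Real.sqrt_one
  · -- optimality
    intro w _ hw1
    rw [hvalue]
    calc (∑ i, a i * w i) ≤ ∑ i, |a i| * |w i| := by
          apply Finset.sum_le_sum
          intro i _
          calc a i * w i ≤ |a i * w i| := le_abs_self _
            _ = |a i| * |w i| := abs_mul _ _
      _ ≤ ∑ i, M * |w i| := by
          apply Finset.sum_le_sum
          intro i _
          exact mul_le_mul_of_nonneg_right (hle i) (abs_nonneg _)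
      _ = M * ∑ i, |w i| := by rw [Finset.mul_sum]
      _ ≤ M * c := mul_le_mul_of_nonneg_left hw1 hMpos.le
      _ = c * M := mul_comm _ _
end

section
/- The proximal operator of the L1-ball indicator: for a in R^p with ||a||_1 <= c, the unique minimizer of (1/2)||x - a||_2^2 over {x : ||x||_1 <= c} is x = a. If ||a||_1 > c, then the minimizer is the soft-thresholding S(a, Delta) applied coordinatewise, where Delta > 0 is chosen so that ||S(a, Delta)||_1 = c. -/
noncomputable def softThreshold (t Δ : ℝ) : ℝ :=
  if t > Δ then t - Δ else if t < -Δ then t + Δ else 0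

lemma st_key (a Δ y : ℝ) (hΔ : 0 < Δ) :
    (a - softThreshold a Δ) * (y - softThreshold a Δ) ≤ Δ * (|y| - |softThreshold a Δ|) := by
  have hy1 : y ≤ |y| := le_abs_self y
  have hy2 : -|y| ≤ y := neg_abs_le y
  unfold softThreshold
  split_ifs with h1 h2
  · rw [abs_of_pos (by linarith : (0:ℝ) < a - Δ)]
    nlinarith
  · rw [abs_of_neg (by linarith : a + Δ < 0)]
    nlinarith
  · rw [abs_zero]
    have ha : |a| ≤ Δ := abs_le.mpr ⟨by linarith, by linarith⟩
    calc (a - 0) * (y - 0) ≤ |a * y| := by rw [sub_zero, sub_zero]; exact le_abs_self _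
      _ = |a| * |y| := abs_mul a y
      _ ≤ Δ * (|y| - 0) := by rw [sub_zero]; exact mul_le_mul_of_nonneg_right ha (abs_nonneg y)

lemma eq_of_sq_sum {p : ℕ} (u v : Fin p → ℝ) (h : ∑ i, (u i - v i) ^ 2 ≤ 0) : u = v := by
  funext i
  have h0 : ∑ i, (u i - v i) ^ 2 = 0 :=
    le_antisymm h (Finset.sum_nonneg fun i _ => sq_nonneg _)
  have := (Finset.sum_eq_zero_iff_of_nonneg (fun i _ => sq_nonneg (u i - v i))).mp h0 i
    (Finset.mem_univ i)
  have := pow_eq_zero_iff (n := 2) (by norm_num) |>.mp this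
  linarith [sub_eq_zero.mp this]

lemma min_ineq (p : ℕ) (c Δ : ℝ) (hΔ : 0 < Δ) (a : Fin p → ℝ)
    (hs : (∑ i, |softThreshold (a i) Δ|) = c)
    (y : Fin p → ℝ) (hy : (∑ i, |y i|) ≤ c) :
    (1 / 2) * ∑ i, (softThreshold (a i) Δ - a i) ^ 2
      + (1 / 2) * ∑ i, (y i - softThreshold (a i) Δ) ^ 2
      ≤ (1 / 2) * ∑ i, (y i - a i) ^ 2 := by
  set s : Fin p → ℝ := fun i => softThreshold (a i) Δ with hsdef
  have h1 : ∑ i, (a i - s i) * (y i - s i) ≤ ∑ i, Δ * (|y i| - |s i|) :=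
    Finset.sum_le_sum fun i _ => st_key (a i) Δ (y i) hΔ
  have h2 : ∑ i, Δ * (|y i| - |s i|) = Δ * ((∑ i, |y i|) - ∑ i, |s i|) := by
    rw [← Finset.mul_sum, Finset.sum_sub_distrib]
  have h3 : Δ * ((∑ i, |y i|) - ∑ i, |s i|) ≤ 0 := by
    apply mul_nonpos_of_nonneg_of_nonpos (le_of_lt hΔ)
    rw [hs]; linarith
  have h4 : ∑ i, (y i - a i) ^ 2
      = ∑ i, ((s i - a i) ^ 2 + (y i - s i) ^ 2 - 2 * ((a i - s i) * (y i - s i))) :=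
    Finset.sum_congr rfl fun i _ => by ring
  rw [h4, Finset.sum_sub_distrib, Finset.sum_add_distrib, ← Finset.mul_sum]
  linarith

theorem stmt_16 (p : ℕ) (c : ℝ) (hc : 0 < c) (a : Fin p → ℝ) :
    ((∑ i, |a i|) ≤ c →
      ∀ x : Fin p → ℝ, (∑ i, |x i|) ≤ c →
        ((∀ y : Fin p → ℝ, (∑ i, |y i|) ≤ c →
            (1 / 2) * ∑ i, (x i - a i) ^ 2 ≤ (1 / 2) * ∑ i, (y i - a i) ^ 2) ↔ x = a)) ∧
    ((∑ i, |a i|) > c →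
      ∀ Δ : ℝ, 0 < Δ → (∑ i, |softThreshold (a i) Δ|) = c →
        ∀ x : Fin p → ℝ, (∑ i, |x i|) ≤ c →
          ((∀ y : Fin p → ℝ, (∑ i, |y i|) ≤ c →
              (1 / 2) * ∑ i, (x i - a i) ^ 2 ≤ (1 / 2) * ∑ i, (y i - a i) ^ 2) ↔
            x = fun i => softThreshold (a i) Δ)) := by
  constructor
  · intro ha x hx
    constructor
    · intro h
      have := h a ha
      simp only [sub_self] at this
      have hz : (1 / 2 : ℝ) * ∑ i, (x i - a i) ^ 2 ≤ 0 := by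
        simpa using this
      exact eq_of_sq_sum x a (by linarith)
    · intro h y hy
      rw [h]
      have h0 : ∑ i, (a i - a i) ^ 2 = 0 := by simp
      have h1 : (0:ℝ) ≤ ∑ i, (y i - a i) ^ 2 := Finset.sum_nonneg fun i _ => sq_nonneg _
      rw [h0]
      linarith
  · intro _ Δ hΔ hs x hx
    have hsfeas : (∑ i, |softThreshold (a i) Δ|) ≤ c := le_of_eq hs
    constructor
    · intro h
      have h1 := h (fun i => softThreshold (a i) Δ) hsfeas
      have h2 := min_ineq p c Δ hΔ a hs x hx
      have h3 : (1 / 2 : ℝ) * ∑ i, (x i - softThreshold (a i) Δ) ^ 2 ≤ 0 := by linarith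
      exact eq_of_sq_sum x (fun i => softThreshold (a i) Δ) (by linarith)
    · intro h y hy
      subst h
      have h2 := min_ineq p c Δ hΔ a hs y hy
      have h3 : (0:ℝ) ≤ ∑ i, (y i - softThreshold (a i) Δ) ^ 2 :=
        Finset.sum_nonneg fun i _ => sq_nonneg _
      linarith
end
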